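/- Let {X_n, n ≥ 1} be random variables stochastically dominated by X with E|X|^p < ∞, 1 < p < 2, let r > p, set s := (2−p)/p restricted to s ≤ (r−p)/[p(r−1)], and ℓ_k := ⌊e^{k^s}⌋. Let φ: ℝ → ℝ satisfy |φ(x)| ≤ |x|. Then ∑_{j=ℓ_k+1}^{ℓ_{k+1}} E[|φ(X_j)| 1{|φ(X_j)| > j^{1/p}/(Log j)^{r/(r−p)}}] / (ℓ_k^{1/p} (LLog ℓ_k)^{r(p−1)/[p(r−1)]}) → 0 as k → ∞. -/

import Mathlib

open MeasureTheory Filter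

noncomputable def Log (x : ℝ) : ℝ := Real.log (max x (Real.exp 1))

noncomputable def LLog (x : ℝ) : ℝ := Real.log (Real.log (max x (Real.exp (Real.exp 1))))

lemma one_le_Log (x : ℝ) : 1 ≤ Log x := by
  show 1 ≤ Real.log (max x (Real.exp 1))
  calc (1:ℝ) = Real.log (Real.exp 1) := (Real.log_exp 1).symm
    _ ≤ _ := Real.log_le_log (Real.exp_pos 1) (le_max_right _ _)

lemma one_le_LLog (x : ℝ) : 1 ≤ LLog x := by
  show 1 ≤ Real.log (Real.log (max x (Real.exp (Real.exp 1))))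
  have h1 : Real.exp 1 ≤ Real.log (max x (Real.exp (Real.exp 1))) := by
    calc Real.exp 1 = Real.log (Real.exp (Real.exp 1)) := (Real.log_exp _).symm
      _ ≤ _ := Real.log_le_log (Real.exp_pos _) (le_max_right _ _)
  calc (1:ℝ) = Real.log (Real.exp 1) := (Real.log_exp 1).symm
    _ ≤ _ := Real.log_le_log (Real.exp_pos 1) h1

/-- Truncated first moment bound from a power tail bound. -/
lemma trunc_bound {Ω : Type*} [MeasurableSpace Ω] (μ : Measure Ω) [IsProbabilityMeasure μ]
    (Y : Ω → ℝ) (hYm : Measurable Y) (hY0 : ∀ ω, 0 ≤ Y ω)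
    (p D : ℝ) (hp : 1 < p) (hD : 0 ≤ D)
    (htail : ∀ u : ℝ, 0 < u → (μ {ω | u < Y ω}).toReal ≤ D / u ^ p)
    (t : ℝ) (ht : 0 < t) :
    ∫ ω in {ω | t < Y ω}, Y ω ∂μ ≤ D * (1 + 1 / (p - 1)) * t ^ (1 - p) := by
  have hp0 : (0:ℝ) < p := by linarith
  have hp1 : (0:ℝ) < p - 1 := by linarith
  have htp : (0:ℝ) < t ^ p := Real.rpow_pos_of_pos ht p
  have ht1p : (0:ℝ) < t ^ (1 - p) := Real.rpow_pos_of_pos ht _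
  have hRHS0 : 0 ≤ D * (1 + 1 / (p - 1)) * t ^ (1 - p) := by positivity
  set S : Set Ω := {ω | t < Y ω} with hS
  have hSm : MeasurableSet S := measurableSet_lt measurable_const hYm
  have hlint : ∫⁻ ω in S, ENNReal.ofReal (Y ω) ∂μ
      ≤ ENNReal.ofReal (D * (1 + 1 / (p - 1)) * t ^ (1 - p)) := by
    have lc := lintegral_eq_lintegral_meas_lt (μ.restrict S) (Filter.Eventually.of_forall hY0)
      hYm.aemeasurable
    rw [lc]
    have happ : ∀ u : ℝ, (μ.restrict S) {a | u < Y a} = μ ({a | u < Y a} ∩ S) := fun u =>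
      Measure.restrict_apply (measurableSet_lt measurable_const hYm)
    rw [show Set.Ioi (0:ℝ) = Set.Ioc 0 t ∪ Set.Ioi t from (Set.Ioc_union_Ioi_eq_Ioi ht.le).symm,
      lintegral_union measurableSet_Ioi (Set.Ioc_disjoint_Ioi le_rfl)]
    have part1 : ∫⁻ u in Set.Ioc (0:ℝ) t, (μ.restrict S) {a | u < Y a}
        ≤ ENNReal.ofReal (D / t ^ p * t) := by
      calc ∫⁻ u in Set.Ioc (0:ℝ) t, (μ.restrict S) {a | u < Y a}
          ≤ ∫⁻ _ in Set.Ioc (0:ℝ) t, μ S := by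
            refine lintegral_mono fun u => ?_
            rw [happ]
            exact measure_mono Set.inter_subset_right
        _ = μ S * ENNReal.ofReal t := by
            rw [setLIntegral_const, Real.volume_Ioc, sub_zero]
        _ ≤ ENNReal.ofReal (D / t ^ p) * ENNReal.ofReal t := by
            gcongr
            rw [← ENNReal.ofReal_toReal (measure_ne_top μ S)]
            exact ENNReal.ofReal_le_ofReal (htail t ht)
        _ = ENNReal.ofReal (D / t ^ p * t) := (ENNReal.ofReal_mul (by positivity)).symm
    have part2 : ∫⁻ u in Set.Ioi t, (μ.restrict S) {a | u < Y a}
        ≤ ENNReal.ofReal (D * (t ^ (1 - p) / (p - 1))) := by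
      have hmono : ∀ u ∈ Set.Ioi t, (μ.restrict S) {a | u < Y a}
          ≤ ENNReal.ofReal (D * u ^ (-p)) := by
        intro u hu
        have hu0 : 0 < u := ht.trans hu
        rw [happ]
        calc μ ({a | u < Y a} ∩ S) ≤ μ {a | u < Y a} := measure_mono Set.inter_subset_left
          _ ≤ ENNReal.ofReal (D * u ^ (-p)) := by
              rw [← ENNReal.ofReal_toReal (measure_ne_top μ _)]
              refine ENNReal.ofReal_le_ofReal ?_
              rw [Real.rpow_neg hu0.le, mul_comm, inv_mul_eq_div]
              exact htail u hu0
      have hInt : IntegrableOn (fun u : ℝ => D * u ^ (-p)) (Set.Ioi t) := by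
        exact (integrableOn_Ioi_rpow_of_lt (by linarith) ht).const_mul D
      have hnn : 0 ≤ᵐ[volume.restrict (Set.Ioi t)] fun u : ℝ => D * u ^ (-p) :=
        (ae_restrict_mem measurableSet_Ioi).mono fun u hu =>
          mul_nonneg hD (Real.rpow_nonneg (le_of_lt (ht.trans hu)) _)
      calc ∫⁻ u in Set.Ioi t, (μ.restrict S) {a | u < Y a}
          ≤ ∫⁻ u in Set.Ioi t, ENNReal.ofReal (D * u ^ (-p)) := by
            refine setLIntegral_mono (by fun_prop) hmono
        _ = ENNReal.ofReal (∫ u in Set.Ioi t, D * u ^ (-p)) :=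
            (ofReal_integral_eq_lintegral_ofReal hInt hnn).symm
        _ = ENNReal.ofReal (D * (t ^ (1 - p) / (p - 1))) := by
            rw [MeasureTheory.integral_const_mul, integral_Ioi_rpow_of_lt (by linarith) ht]
            rw [show -p + 1 = 1 - p by ring, show p - 1 = -(1 - p) by ring, div_neg, neg_div]
    calc (∫⁻ u in Set.Ioc (0:ℝ) t, (μ.restrict S) {a | u < Y a})
          + ∫⁻ u in Set.Ioi t, (μ.restrict S) {a | u < Y a}
        ≤ ENNReal.ofReal (D / t ^ p * t) + ENNReal.ofReal (D * (t ^ (1 - p) / (p - 1))) :=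
          add_le_add part1 part2
      _ = ENNReal.ofReal (D / t ^ p * t + D * (t ^ (1 - p) / (p - 1))) :=
          (ENNReal.ofReal_add (by positivity) (by positivity)).symm
      _ = ENNReal.ofReal (D * (1 + 1 / (p - 1)) * t ^ (1 - p)) := by
          congr 1
          have h1 : t ^ (1 - p) = t / t ^ p := by
            rw [Real.rpow_sub ht, Real.rpow_one]
          rw [h1]
          field_simp
  by_cases hInt : Integrable Y (μ.restrict S)
  · rw [integral_eq_lintegral_of_nonneg_ae (Filter.Eventually.of_forall hY0)
      hInt.aestronglyMeasurable]
    exact ENNReal.toReal_le_of_le_ofReal hRHS0 hlint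
  · rw [integral_undef hInt]
    exact hRHS0

set_option maxHeartbeats 1000000 in
theorem stmt_19 {Ω : Type*} [MeasurableSpace Ω] (μ : Measure Ω) [IsProbabilityMeasure μ]
    (p r : ℝ) (hp1 : 1 < p) (hp2 : p < 2) (hr : p < r)
    (X : ℕ → Ω → ℝ) (hXm : ∀ n, Measurable (X n))
    (Xd : Ω → ℝ) (hXdm : Measurable Xd)
    (C : ℝ) (hC : 0 < C)
    (hdom : ∀ n : ℕ, ∀ t : ℝ, 0 < t →
      (μ {ω | t < |X n ω|}).toReal ≤ C * (μ {ω | t < |Xd ω|}).toReal)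
    (hXp : Integrable (fun ω => |Xd ω| ^ p) μ)
    (s : ℝ) (hs : s = (2 - p) / p) (hs' : s ≤ (r - p) / (p * (r - 1)))
    (ℓ : ℕ → ℕ) (hℓ : ∀ k : ℕ, ℓ k = Nat.floor (Real.exp ((k : ℝ) ^ s)))
    (φ : ℝ → ℝ) (hφm : Measurable φ) (hφ : ∀ x : ℝ, |φ x| ≤ |x|) :
    Tendsto (fun k : ℕ =>
      (∑ j ∈ Finset.Ioc (ℓ k) (ℓ (k + 1)),
        ∫ ω in {ω | (j : ℝ) ^ (1 / p) / Log j ^ (r / (r - p)) < |φ (X j ω)|},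
          |φ (X j ω)| ∂μ) /
        ((ℓ k : ℝ) ^ (1 / p) * LLog (ℓ k : ℝ) ^ (r * (p - 1) / (p * (r - 1)))))
      atTop (nhds 0) := by
  have hp0 : (0:ℝ) < p := by linarith
  have hp1' : (0:ℝ) < p - 1 := by linarith
  have hrp : (0:ℝ) < r - p := by linarith
  have hr1 : (0:ℝ) < r - 1 := by linarith
  set a := r * (p - 1) / (p * (r - 1)) with ha_def
  set c := r / (r - p) with hc_def
  set b := r * (p - 1) / (r - p) with hb_def
  have ha : 0 < a := by
    rw [ha_def]; exact div_pos (mul_pos (by linarith) hp1') (mul_pos hp0 hr1)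
  have hb0 : 0 < b := by
    rw [hb_def]; exact div_pos (mul_pos (by linarith) hp1') hrp
  have hbc : b = c * (p - 1) := by rw [hb_def, hc_def]; ring
  have hs0 : 0 < s := by rw [hs]; exact div_pos (by linarith) hp0
  have hs1 : s ≤ 1 := by rw [hs, div_le_one hp0]; linarith
  have hsb : s * b + (s - 1) ≤ 0 := by
    have hb1 : (b + 1) = p * (r - 1) / (r - p) := by rw [hb_def]; field_simp; ring
    have h2 : s * (b + 1) ≤ 1 := by
      calc s * (b + 1) ≤ ((r - p) / (p * (r - 1))) * (b + 1) :=
            mul_le_mul_of_nonneg_right hs' (by linarith)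
        _ = 1 := by rw [hb1]; field_simp
    nlinarith
  set E := ∫ ω, |Xd ω| ^ p ∂μ with hE_def
  have hE0 : 0 ≤ E := integral_nonneg fun ω => Real.rpow_nonneg (abs_nonneg _) p
  set K := C * E * (1 + 1 / (p - 1)) with hK_def
  have hfac : (0:ℝ) ≤ 1 + 1 / (p - 1) := by
    have := one_div_pos.mpr hp1'; linarith
  have hK0 : 0 ≤ K := by rw [hK_def]; exact mul_nonneg (mul_nonneg hC.le hE0) hfac
  -- tail bound
  have tail : ∀ (j : ℕ) (u : ℝ), 0 < u →
      (μ {ω | u < |φ (X j ω)|}).toReal ≤ C * E / u ^ p := by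
    intro j u hu
    have hup : (0:ℝ) < u ^ p := Real.rpow_pos_of_pos hu p
    have hsub : {ω | u < |φ (X j ω)|} ⊆ {ω | u < |X j ω|} := fun ω h =>
      lt_of_lt_of_le h (hφ _)
    have hmarkov : (μ {ω | u < |Xd ω|}).toReal ≤ E / u ^ p := by
      have hsub2 : {ω | u < |Xd ω|} ⊆ {ω | u ^ p ≤ |Xd ω| ^ p} := fun ω h =>
        Real.rpow_le_rpow hu.le (le_of_lt h) hp0.le
      have hm := mul_meas_ge_le_integral_of_nonneg
        (Filter.Eventually.of_forall fun ω => Real.rpow_nonneg (abs_nonneg (Xd ω)) p)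
        hXp (u ^ p)
      calc (μ {ω | u < |Xd ω|}).toReal
          ≤ (μ {ω | u ^ p ≤ |Xd ω| ^ p}).toReal :=
            ENNReal.toReal_mono (measure_ne_top μ _) (measure_mono hsub2)
        _ ≤ E / u ^ p := by rw [le_div_iff₀ hup]; rw [hE_def]; rw [mul_comm]; exact hm
    calc (μ {ω | u < |φ (X j ω)|}).toReal
        ≤ (μ {ω | u < |X j ω|}).toReal :=
          ENNReal.toReal_mono (measure_ne_top μ _) (measure_mono hsub)
      _ ≤ C * (μ {ω | u < |Xd ω|}).toReal := hdom j u hu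
      _ ≤ C * (E / u ^ p) := mul_le_mul_of_nonneg_left hmarkov hC.le
      _ = C * E / u ^ p := by rw [mul_div_assoc]
  -- truncated-moment bound for each j ≥ 1
  have keybound : ∀ j : ℕ, 1 ≤ j →
      (∫ ω in {ω | (j : ℝ) ^ (1 / p) / Log j ^ c < |φ (X j ω)|}, |φ (X j ω)| ∂μ)
        ≤ K * ((j : ℝ) ^ ((1 - p) / p) * Log (j : ℝ) ^ b) := by
    intro j hj
    have hjR : (1:ℝ) ≤ (j:ℝ) := by exact_mod_cast hj
    have hj0 : (0:ℝ) < (j:ℝ) := by linarith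
    have hLog1 : 1 ≤ Log (j:ℝ) := one_le_Log _
    have hLog0 : (0:ℝ) < Log (j:ℝ) := by linarith
    have htj : 0 < (j : ℝ) ^ (1 / p) / Log (j:ℝ) ^ c := by positivity
    have h := trunc_bound μ (fun ω => |φ (X j ω)|) ((hφm.comp (hXm j)).abs)
      (fun ω => abs_nonneg _) p (C * E) hp1 (mul_nonneg hC.le hE0) (tail j) _ htj
    have hpow : ((j : ℝ) ^ (1 / p) / Log (j:ℝ) ^ c) ^ (1 - p)
        = (j : ℝ) ^ ((1 - p) / p) * Log (j : ℝ) ^ b := by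
      rw [Real.div_rpow (by positivity) (by positivity),
        ← Real.rpow_mul (le_of_lt hj0), ← Real.rpow_mul hLog0.le,
        show (1 / p) * (1 - p) = (1 - p) / p from by ring,
        show c * (1 - p) = -b from by rw [hbc]; ring,
        Real.rpow_neg hLog0.le, div_eq_mul_inv, inv_inv]
    calc (∫ ω in {ω | (j : ℝ) ^ (1 / p) / Log (j:ℝ) ^ c < |φ (X j ω)|}, |φ (X j ω)| ∂μ)
        ≤ C * E * (1 + 1 / (p - 1)) * ((j : ℝ) ^ (1 / p) / Log (j:ℝ) ^ c) ^ (1 - p) := h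
      _ = K * ((j : ℝ) ^ ((1 - p) / p) * Log (j : ℝ) ^ b) := by rw [hpow, hK_def]
  -- facts about ℓ
  have hl1 : ∀ k : ℕ, 1 ≤ ℓ k := by
    intro k
    rw [hℓ]
    refine Nat.le_floor ?_
    have h0 : (0:ℝ) ≤ (k:ℝ) ^ s := Real.rpow_nonneg (Nat.cast_nonneg k) s
    simpa using Real.one_le_exp h0
  have hub : ∀ k : ℕ, (ℓ k : ℝ) ≤ Real.exp ((k:ℝ) ^ s) := by
    intro k; rw [hℓ]; exact Nat.floor_le (Real.exp_pos _).le
  have hlb : ∀ k : ℕ, Real.exp ((k:ℝ) ^ s) - 1 ≤ (ℓ k : ℝ) := by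
    intro k; rw [hℓ]; exact (Nat.sub_one_lt_floor _).le
  have hlmono : ∀ k : ℕ, ℓ k ≤ ℓ (k + 1) := by
    intro k
    rw [hℓ, hℓ]
    refine Nat.floor_mono (Real.exp_le_exp.mpr ?_)
    exact Real.rpow_le_rpow (Nat.cast_nonneg k) (by push_cast; linarith) hs0.le
  -- nonnegativity of the sequence
  have hfnn : ∀ k : ℕ, 0 ≤
      (∑ j ∈ Finset.Ioc (ℓ k) (ℓ (k + 1)),
        ∫ ω in {ω | (j : ℝ) ^ (1 / p) / Log j ^ c < |φ (X j ω)|}, |φ (X j ω)| ∂μ) /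
        ((ℓ k : ℝ) ^ (1 / p) * LLog (ℓ k : ℝ) ^ a) := by
    intro k
    refine div_nonneg (Finset.sum_nonneg fun j _ => integral_nonneg fun ω => abs_nonneg _) ?_
    exact mul_nonneg (Real.rpow_nonneg (Nat.cast_nonneg _) _)
      (Real.rpow_nonneg (by linarith [one_le_LLog ((ℓ k : ℝ))]) _)
  -- the dominating sequence
  set g : ℕ → ℝ := fun k =>
    (K * (2:ℝ) ^ b) * ((2 * Real.exp 1 * s) / LLog (ℓ k : ℝ) ^ a
      + 2 * ((((k:ℝ) ^ s) ^ b) * Real.exp (-((k:ℝ) ^ s)))) with hg_def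
  -- eventual domination
  have hbound : ∀ k : ℕ, 1 ≤ k →
      (∑ j ∈ Finset.Ioc (ℓ k) (ℓ (k + 1)),
        ∫ ω in {ω | (j : ℝ) ^ (1 / p) / Log j ^ c < |φ (X j ω)|}, |φ (X j ω)| ∂μ) /
        ((ℓ k : ℝ) ^ (1 / p) * LLog (ℓ k : ℝ) ^ a) ≤ g k := by
    intro k hk
    have hkR : (1:ℝ) ≤ (k:ℝ) := by exact_mod_cast hk
    have hkR0 : (0:ℝ) < (k:ℝ) := by linarith
    have hL1 : 1 ≤ LLog (ℓ k : ℝ) := one_le_LLog _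
    have hLa1 : 1 ≤ LLog (ℓ k : ℝ) ^ a := Real.one_le_rpow hL1 ha.le
    have hLa0 : (0:ℝ) < LLog (ℓ k : ℝ) ^ a := by linarith
    have hlkR : (1:ℝ) ≤ (ℓ k : ℝ) := by exact_mod_cast hl1 k
    have hlk0 : (0:ℝ) < (ℓ k : ℝ) := by linarith
    have hDen : (0:ℝ) < (ℓ k : ℝ) ^ (1 / p) * LLog (ℓ k : ℝ) ^ a :=
      mul_pos (Real.rpow_pos_of_pos hlk0 _) hLa0
    set W := (2:ℝ) ^ b * (((k:ℝ) ^ s) ^ b) with hW_def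
    have hW0 : 0 ≤ W := by
      rw [hW_def]
      exact mul_nonneg (Real.rpow_nonneg (by norm_num) _) (Real.rpow_nonneg (by positivity) _)
    -- per-term bound
    have hIj : ∀ j ∈ Finset.Ioc (ℓ k) (ℓ (k + 1)),
        (∫ ω in {ω | (j : ℝ) ^ (1 / p) / Log j ^ c < |φ (X j ω)|}, |φ (X j ω)| ∂μ)
          ≤ K * ((ℓ k : ℝ) ^ ((1 - p) / p) * W) := by
      intro j hj
      obtain ⟨hj1, hj2⟩ := Finset.mem_Ioc.mp hj
      have hj1' : 1 ≤ j := le_trans (hl1 k) hj1.le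
      have hjR : (ℓ k : ℝ) ≤ (j : ℝ) := by exact_mod_cast hj1.le
      refine le_trans (keybound j hj1') (mul_le_mul_of_nonneg_left ?_ hK0)
      have h1' : (j : ℝ) ^ ((1 - p) / p) ≤ (ℓ k : ℝ) ^ ((1 - p) / p) :=
        Real.rpow_le_rpow_of_nonpos hlk0 hjR
          (div_nonpos_of_nonpos_of_nonneg (by linarith) hp0.le)
      have h2' : Log (j : ℝ) ^ b ≤ W := by
        have hk1s1 : (1:ℝ) ≤ ((k:ℝ) + 1) ^ s := Real.one_le_rpow (by linarith) hs0.le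
        have hLogle : Log (j : ℝ) ≤ ((k:ℝ) + 1) ^ s := by
          have hjle : (j : ℝ) ≤ Real.exp (((k:ℝ) + 1) ^ s) := by
            have h1 : (j : ℝ) ≤ (ℓ (k + 1) : ℝ) := by exact_mod_cast hj2
            have h2 := hub (k + 1)
            push_cast at h2
            linarith
          have hmax : max (j : ℝ) (Real.exp 1) ≤ Real.exp (((k:ℝ) + 1) ^ s) :=
            max_le hjle (Real.exp_le_exp.mpr (by linarith))
          calc Log (j : ℝ) = Real.log (max (j : ℝ) (Real.exp 1)) := rfl
            _ ≤ Real.log (Real.exp (((k:ℝ) + 1) ^ s)) :=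
                Real.log_le_log (lt_of_lt_of_le (Real.exp_pos 1) (le_max_right _ _)) hmax
            _ = ((k:ℝ) + 1) ^ s := Real.log_exp _
        have h2k : ((k:ℝ) + 1) ^ s ≤ 2 * (k:ℝ) ^ s := by
          calc ((k:ℝ) + 1) ^ s ≤ (2 * (k:ℝ)) ^ s :=
              Real.rpow_le_rpow (by linarith) (by linarith) hs0.le
            _ = 2 ^ s * (k:ℝ) ^ s := Real.mul_rpow (by norm_num) hkR0.le
            _ ≤ 2 * (k:ℝ) ^ s := by
                have : (2:ℝ) ^ s ≤ 2 ^ (1:ℝ) :=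
                  Real.rpow_le_rpow_of_exponent_le one_le_two hs1
                rw [Real.rpow_one] at this
                exact mul_le_mul_of_nonneg_right this (Real.rpow_nonneg hkR0.le _)
        calc Log (j : ℝ) ^ b ≤ (2 * (k:ℝ) ^ s) ^ b :=
            Real.rpow_le_rpow (by linarith [one_le_Log (j:ℝ)])
              (le_trans hLogle h2k) hb0.le
          _ = W := by
            rw [hW_def, Real.mul_rpow (by norm_num) (Real.rpow_nonneg hkR0.le _)]
      have hLognn : (0:ℝ) ≤ Log (j : ℝ) ^ b := Real.rpow_nonneg
        (by linarith [one_le_Log (j:ℝ)]) _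
      exact mul_le_mul h1' h2' hLognn (Real.rpow_nonneg hlk0.le _)
    -- sum bound
    have hsum : (∑ j ∈ Finset.Ioc (ℓ k) (ℓ (k + 1)),
        ∫ ω in {ω | (j : ℝ) ^ (1 / p) / Log j ^ c < |φ (X j ω)|}, |φ (X j ω)| ∂μ)
          ≤ ((ℓ (k + 1) : ℝ) - (ℓ k : ℝ)) * (K * ((ℓ k : ℝ) ^ ((1 - p) / p) * W)) := by
      have h := Finset.sum_le_card_nsmul _ _ _ hIj
      rw [Nat.card_Ioc, nsmul_eq_mul] at h
      rwa [Nat.cast_sub (hlmono k)] at h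
    set Δ := (ℓ (k + 1) : ℝ) - (ℓ k : ℝ) with hΔ_def
    have hΔ0 : 0 ≤ Δ := by
      rw [hΔ_def]; have : (ℓ k : ℝ) ≤ (ℓ (k+1) : ℝ) := by exact_mod_cast hlmono k
      linarith
    -- pass to the quotient
    have step1 : (∑ j ∈ Finset.Ioc (ℓ k) (ℓ (k + 1)),
        ∫ ω in {ω | (j : ℝ) ^ (1 / p) / Log j ^ c < |φ (X j ω)|}, |φ (X j ω)| ∂μ) /
        ((ℓ k : ℝ) ^ (1 / p) * LLog (ℓ k : ℝ) ^ a)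
          ≤ (Δ * (K * ((ℓ k : ℝ) ^ ((1 - p) / p) * W))) /
            ((ℓ k : ℝ) ^ (1 / p) * LLog (ℓ k : ℝ) ^ a) := by
      gcongr
    have hsplit : ((ℓ k : ℝ)) ^ (1 / p) = (ℓ k : ℝ) ^ ((1 - p) / p) * (ℓ k : ℝ) := by
      rw [show (1:ℝ) / p = (1 - p) / p + 1 from by field_simp; ring, Real.rpow_add_one (ne_of_gt hlk0)]
    have hID : (Δ * (K * ((ℓ k : ℝ) ^ ((1 - p) / p) * W))) /
        ((ℓ k : ℝ) ^ (1 / p) * LLog (ℓ k : ℝ) ^ a)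
          = (K * W) * (Δ / ((ℓ k : ℝ) * LLog (ℓ k : ℝ) ^ a)) := by
      rw [hsplit]
      have h1 : (ℓ k : ℝ) ^ ((1 - p) / p) ≠ 0 := ne_of_gt (Real.rpow_pos_of_pos hlk0 _)
      have h2 : (ℓ k : ℝ) ≠ 0 := ne_of_gt hlk0
      have h3 : LLog (ℓ k : ℝ) ^ a ≠ 0 := ne_of_gt hLa0
      field_simp
    -- bound Δ
    have hΔub : Δ ≤ Real.exp ((k:ℝ) ^ s) * (Real.exp 1 * (s * (k:ℝ) ^ (s - 1))) + 1 := by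
      set δ := ((k:ℝ) + 1) ^ s - (k:ℝ) ^ s with hδ_def
      have hδ0 : 0 ≤ δ := by
        have := Real.rpow_le_rpow hkR0.le (by linarith : (k:ℝ) ≤ (k:ℝ) + 1) hs0.le
        rw [hδ_def]; linarith
      have hks1 : (k:ℝ) ^ (s - 1) ≤ 1 :=
        Real.rpow_le_one_of_one_le_of_nonpos hkR (by linarith)
      have hδle : δ ≤ s * (k:ℝ) ^ (s - 1) := by
        have hkk : (k:ℝ) + 1 = (k:ℝ) * (1 + 1 / (k:ℝ)) := by field_simp
        have h1k : (0:ℝ) ≤ 1 / (k:ℝ) := by positivity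
        have hbern : (1 + 1 / (k:ℝ)) ^ s ≤ 1 + s * (1 / (k:ℝ)) :=
          rpow_one_add_le_one_add_mul_self (by linarith) hs0.le hs1
        have hmul : ((k:ℝ) + 1) ^ s = (k:ℝ) ^ s * (1 + 1 / (k:ℝ)) ^ s := by
          rw [hkk, Real.mul_rpow hkR0.le (by positivity)]
        have hred : (k:ℝ) ^ s * (1 + s * (1 / (k:ℝ))) = (k:ℝ) ^ s + s * (k:ℝ) ^ (s - 1) := by
          rw [Real.rpow_sub hkR0, Real.rpow_one]; field_simp
        have hfin : ((k:ℝ) + 1) ^ s ≤ (k:ℝ) ^ s + s * (k:ℝ) ^ (s - 1) := by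
          rw [hmul, ← hred]
          exact mul_le_mul_of_nonneg_left hbern (Real.rpow_nonneg hkR0.le _)
        rw [hδ_def]; linarith
      have hδ1 : δ ≤ 1 := le_trans hδle (by nlinarith [Real.rpow_nonneg hkR0.le (s - 1)])
      have hexpδ : Real.exp δ - 1 ≤ Real.exp 1 * δ := by
        have h1 : 1 - δ ≤ (Real.exp δ)⁻¹ := by
          rw [← Real.exp_neg]; linarith [Real.add_one_le_exp (-δ)]
        have h2 : (1 - δ) * Real.exp δ ≤ 1 := by
          calc (1 - δ) * Real.exp δ ≤ (Real.exp δ)⁻¹ * Real.exp δ :=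
                mul_le_mul_of_nonneg_right h1 (Real.exp_pos δ).le
            _ = 1 := inv_mul_cancel₀ (ne_of_gt (Real.exp_pos δ))
        have h3 : Real.exp δ ≤ Real.exp 1 := Real.exp_le_exp.mpr hδ1
        nlinarith [Real.exp_pos δ]
      have hexpadd : Real.exp (((k:ℝ) + 1) ^ s) = Real.exp ((k:ℝ) ^ s) * Real.exp δ := by
        rw [← Real.exp_add]; congr 1; rw [hδ_def]; ring
      have hℓ1ub : (ℓ (k + 1) : ℝ) ≤ Real.exp (((k:ℝ) + 1) ^ s) := by
        have h := hub (k + 1); push_cast at h; exact h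
      have hA := (Real.exp_pos ((k:ℝ) ^ s)).le
      have hmul1 : Real.exp ((k:ℝ) ^ s) * (Real.exp δ - 1)
          ≤ Real.exp ((k:ℝ) ^ s) * (Real.exp 1 * δ) := mul_le_mul_of_nonneg_left hexpδ hA
      have hmul2 : Real.exp ((k:ℝ) ^ s) * (Real.exp 1 * δ)
          ≤ Real.exp ((k:ℝ) ^ s) * (Real.exp 1 * (s * (k:ℝ) ^ (s - 1))) :=
        mul_le_mul_of_nonneg_left (mul_le_mul_of_nonneg_left hδle (Real.exp_pos 1).le) hA
      calc Δ = (ℓ (k + 1) : ℝ) - (ℓ k : ℝ) := hΔ_def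
        _ ≤ Real.exp (((k:ℝ) + 1) ^ s) - (Real.exp ((k:ℝ) ^ s) - 1) :=
            sub_le_sub hℓ1ub (hlb k)
        _ = Real.exp ((k:ℝ) ^ s) * (Real.exp δ - 1) + 1 := by rw [hexpadd]; ring
        _ ≤ Real.exp ((k:ℝ) ^ s) * (Real.exp 1 * (s * (k:ℝ) ^ (s - 1))) + 1 := by
            linarith [hmul1.trans hmul2]
    have hMlb : Real.exp ((k:ℝ) ^ s) / 2 ≤ (ℓ k : ℝ) := by
      have h1 : (1:ℝ) ≤ (k:ℝ) ^ s := Real.one_le_rpow hkR hs0.le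
      have h2 : Real.exp 1 ≤ Real.exp ((k:ℝ) ^ s) := Real.exp_le_exp.mpr h1
      have h3 := Real.exp_one_gt_d9
      have h4 := hlb k
      linarith
    have hdivΔ : Δ / (ℓ k : ℝ)
        ≤ 2 * Real.exp 1 * (s * (k:ℝ) ^ (s - 1)) + 2 * Real.exp (-((k:ℝ) ^ s)) := by
      have hA0 : (0:ℝ) < Real.exp ((k:ℝ) ^ s) := Real.exp_pos _
      have h := div_le_div₀ (by positivity) hΔub (by positivity) hMlb
      calc Δ / (ℓ k : ℝ)
          ≤ (Real.exp ((k:ℝ) ^ s) * (Real.exp 1 * (s * (k:ℝ) ^ (s - 1))) + 1) /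
            (Real.exp ((k:ℝ) ^ s) / 2) := h
        _ = 2 * Real.exp 1 * (s * (k:ℝ) ^ (s - 1)) + 2 * (Real.exp ((k:ℝ) ^ s))⁻¹ := by
            field_simp
        _ = 2 * Real.exp 1 * (s * (k:ℝ) ^ (s - 1)) + 2 * Real.exp (-((k:ℝ) ^ s)) := by
            rw [Real.exp_neg]
    have hdiv2 : Δ / ((ℓ k : ℝ) * LLog (ℓ k : ℝ) ^ a)
        ≤ (2 * Real.exp 1 * (s * (k:ℝ) ^ (s - 1))) / LLog (ℓ k : ℝ) ^ a
          + 2 * Real.exp (-((k:ℝ) ^ s)) := by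
      rw [← div_div]
      have hstep : Δ / (ℓ k : ℝ) / LLog (ℓ k : ℝ) ^ a
          ≤ (2 * Real.exp 1 * (s * (k:ℝ) ^ (s - 1)) + 2 * Real.exp (-((k:ℝ) ^ s))) /
            LLog (ℓ k : ℝ) ^ a := by gcongr
      have hdrop : (2 * Real.exp (-((k:ℝ) ^ s))) / LLog (ℓ k : ℝ) ^ a
          ≤ 2 * Real.exp (-((k:ℝ) ^ s)) := div_le_self (by positivity) hLa1
      calc Δ / (ℓ k : ℝ) / LLog (ℓ k : ℝ) ^ a
          ≤ (2 * Real.exp 1 * (s * (k:ℝ) ^ (s - 1)) + 2 * Real.exp (-((k:ℝ) ^ s))) /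
            LLog (ℓ k : ℝ) ^ a := hstep
        _ = (2 * Real.exp 1 * (s * (k:ℝ) ^ (s - 1))) / LLog (ℓ k : ℝ) ^ a
            + (2 * Real.exp (-((k:ℝ) ^ s))) / LLog (ℓ k : ℝ) ^ a := add_div _ _ _
        _ ≤ _ := by linarith [hdrop]
    have hone : (((k:ℝ) ^ s) ^ b) * (k:ℝ) ^ (s - 1) ≤ 1 := by
      rw [← Real.rpow_mul hkR0.le, ← Real.rpow_add hkR0]
      exact Real.rpow_le_one_of_one_le_of_nonpos hkR hsb
    have hKW0 : 0 ≤ K * W := mul_nonneg hK0 hW0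
    have h2b0 : (0:ℝ) ≤ K * (2:ℝ) ^ b :=
      mul_nonneg hK0 (Real.rpow_nonneg (by norm_num) _)
    have hfirst : (K * W) * ((2 * Real.exp 1 * (s * (k:ℝ) ^ (s - 1))) / LLog (ℓ k : ℝ) ^ a)
        ≤ (K * (2:ℝ) ^ b) * ((2 * Real.exp 1 * s) / LLog (ℓ k : ℝ) ^ a) := by
      have key : (K * W) * ((2 * Real.exp 1 * (s * (k:ℝ) ^ (s - 1))) / LLog (ℓ k : ℝ) ^ a)
          = (K * (2:ℝ) ^ b) *
            (((2 * Real.exp 1 * s) * ((((k:ℝ) ^ s) ^ b) * (k:ℝ) ^ (s - 1))) /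
              LLog (ℓ k : ℝ) ^ a) := by
        rw [hW_def]; ring
      rw [key]
      refine mul_le_mul_of_nonneg_left ?_ h2b0
      have hinner : (2 * Real.exp 1 * s) * ((((k:ℝ) ^ s) ^ b) * (k:ℝ) ^ (s - 1))
          ≤ 2 * Real.exp 1 * s := by
        calc (2 * Real.exp 1 * s) * ((((k:ℝ) ^ s) ^ b) * (k:ℝ) ^ (s - 1))
            ≤ (2 * Real.exp 1 * s) * 1 := mul_le_mul_of_nonneg_left hone (by positivity)
          _ = 2 * Real.exp 1 * s := mul_one _
      gcongr
    calc (∑ j ∈ Finset.Ioc (ℓ k) (ℓ (k + 1)),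
        ∫ ω in {ω | (j : ℝ) ^ (1 / p) / Log j ^ c < |φ (X j ω)|}, |φ (X j ω)| ∂μ) /
        ((ℓ k : ℝ) ^ (1 / p) * LLog (ℓ k : ℝ) ^ a)
        ≤ (Δ * (K * ((ℓ k : ℝ) ^ ((1 - p) / p) * W))) /
            ((ℓ k : ℝ) ^ (1 / p) * LLog (ℓ k : ℝ) ^ a) := step1
      _ = (K * W) * (Δ / ((ℓ k : ℝ) * LLog (ℓ k : ℝ) ^ a)) := hID
      _ ≤ (K * W) * ((2 * Real.exp 1 * (s * (k:ℝ) ^ (s - 1))) / LLog (ℓ k : ℝ) ^ a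
            + 2 * Real.exp (-((k:ℝ) ^ s))) := mul_le_mul_of_nonneg_left hdiv2 hKW0
      _ = (K * W) * ((2 * Real.exp 1 * (s * (k:ℝ) ^ (s - 1))) / LLog (ℓ k : ℝ) ^ a)
            + (K * W) * (2 * Real.exp (-((k:ℝ) ^ s))) := mul_add _ _ _
      _ ≤ (K * (2:ℝ) ^ b) * ((2 * Real.exp 1 * s) / LLog (ℓ k : ℝ) ^ a)
            + (K * (2:ℝ) ^ b) * (2 * ((((k:ℝ) ^ s) ^ b) * Real.exp (-((k:ℝ) ^ s)))) := by
          refine add_le_add hfirst (le_of_eq ?_)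
          rw [hW_def]; ring
      _ = g k := by simp only [hg_def]; ring
  -- limits
  have hks : Tendsto (fun k : ℕ => ((k:ℝ)) ^ s) atTop atTop :=
    (tendsto_rpow_atTop hs0).comp tendsto_natCast_atTop_atTop
  have hltop : Tendsto (fun k : ℕ => (ℓ k : ℝ)) atTop atTop := by
    have hf : Tendsto (fun k : ℕ => Real.exp ((k:ℝ) ^ s) - 1) atTop atTop :=
      (tendsto_atTop_add_const_right atTop (-1) (Real.tendsto_exp_atTop.comp hks)).congr
        fun k => (sub_eq_add_neg _ _).symm
    exact tendsto_atTop_mono hlb hf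
  have hLL : Tendsto (fun k : ℕ => LLog (ℓ k : ℝ)) atTop atTop := by
    have hmax : Tendsto (fun k : ℕ => max (ℓ k : ℝ) (Real.exp (Real.exp 1))) atTop atTop :=
      tendsto_atTop_mono (fun k => le_max_left _ _) hltop
    exact Real.tendsto_log_atTop.comp (Real.tendsto_log_atTop.comp hmax)
  have hLa : Tendsto (fun k : ℕ => LLog (ℓ k : ℝ) ^ a) atTop atTop :=
    (tendsto_rpow_atTop ha).comp hLL
  have hT1 : Tendsto (fun k : ℕ => (2 * Real.exp 1 * s) / LLog (ℓ k : ℝ) ^ a) atTop (nhds 0) :=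
    hLa.const_div_atTop _
  have hT2 : Tendsto (fun k : ℕ => (((k:ℝ) ^ s) ^ b) * Real.exp (-((k:ℝ) ^ s)))
      atTop (nhds 0) := by
    have h := (tendsto_rpow_mul_exp_neg_mul_atTop_nhds_zero b 1 one_pos).comp hks
    refine h.congr fun k => ?_
    simp [Function.comp, neg_one_mul]
  have hg0 : Tendsto g atTop (nhds 0) := by
    have h := ((hT1.add (hT2.const_mul 2)).const_mul (K * (2:ℝ) ^ b))
    simpa [hg_def] using h
  refine squeeze_zero' (Filter.Eventually.of_forall hfnn) ?_ hg0
  exact eventually_atTop.mpr ⟨1, hbound⟩
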